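/- With L₀ := {V ∩ Σ : V subspace of ℂ²⊗ℂ²} on the set Σ of product states in P(ℂ²⊗ℂ²): L₀ is a p-lattice (contains ∅, Σ, all singletons, and is closed under arbitrary intersections), but L₀ admits no ortho-complementation: there is no map ': L₀ → L₀ that is order-reversing, involutive, and satisfies a ∧ a' = ∅ and a ∨ a' = Σ for all a ∈ L₀. -/

import Mathlib

open Set

/-- For a binary relation `R` on `α` and `a ⊆ α`, the set `a^⊥ = {q : q ⊥ p for all p ∈ a}`. -/
def pol {α : Type*} (R : α → α → Prop) (a : Set α) : Set α := {q | ∀ p ∈ a, R q p}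

/-- An orthogonality relation: anti-reflexive, symmetric, singletons biorthogonally closed. -/
def IsOrthRel {α : Type*} (R : α → α → Prop) : Prop :=
  (∀ p, ¬ R p p) ∧ (∀ p q, R p q → R q p) ∧ ∀ p : α, pol R (pol R {p}) = {p}

/-- A p-lattice on `α`: contains `∅`, `univ`, all singletons, closed under arbitrary
intersections. -/
def IsPLattice {α : Type*} (L : Set (Set α)) : Prop :=
  ∅ ∈ L ∧ Set.univ ∈ L ∧ (∀ S ⊆ L, ⋂₀ S ∈ L) ∧ ∀ p : α, {p} ∈ L

/-- The join (closure) of a subset `s` in a p-lattice `L`: the intersection of all members of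
`L` containing `s`. -/
def cl {α : Type*} (L : Set (Set α)) (s : Set α) : Set α := ⋂₀ {c ∈ L | s ⊆ c}

/-- The separated-product relation `#` on `α × β`: `p # q ↔ p₁ ⊥₁ q₁ or p₂ ⊥₂ q₂`. -/
def sharp {α β : Type*} (R1 : α → α → Prop) (R2 : β → β → Prop) :
    α × β → α × β → Prop := fun p q => R1 p.1 q.1 ∨ R2 p.2 q.2

noncomputable section

open Projectivization TensorProduct

/-- The projective line of `ℂ²`. -/
abbrev PC2 := Projectivization ℂ (EuclideanSpace ℂ (Fin 2))

/-- `L₀ = {V ∩ Σ : V a subspace of ℂ² ⊗ ℂ²}` on the set `Σ` of product states. -/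
def L0 : Set (Set (PC2 × PC2)) :=
  {a | ∃ W : Submodule ℂ (EuclideanSpace ℂ (Fin 2) ⊗[ℂ] EuclideanSpace ℂ (Fin 2)),
    a = {x : PC2 × PC2 | x.1.rep ⊗ₜ[ℂ] x.2.rep ∈ W}}

namespace Stmt19Aux

open Projectivization TensorProduct Module Submodule

abbrev EE := EuclideanSpace ℂ (Fin 2)
abbrev TT := EE ⊗[ℂ] EE

def bE : Basis (Fin 2) ℂ EE := PiLp.basisFun 2 ℂ (Fin 2)
def bT : Basis (Fin 2 × Fin 2) ℂ TT := bE.tensorProduct bE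

lemma bT_repr_tmul (a b : EE) (i j : Fin 2) :
    bT.repr (a ⊗ₜ[ℂ] b) (i, j) = a i * b j := by
  simp [bT, bE, smul_eq_mul, mul_comm]

lemma exists_coord_ne {a : EE} (ha : a ≠ 0) : ∃ i, a i ≠ 0 := by
  by_contra h
  push_neg at h
  exact ha (bE.ext_elem fun i => by simp [bE, h i])

lemma eq_smul_of_coords {a u : EE} {γ : ℂ} (h : ∀ i, a i = γ * u i) : a = γ • u :=
  bE.ext_elem fun i => by simp [bE, h i, PiLp.smul_apply, smul_eq_mul]

lemma tmul_ne_zero' {a b : EE} (ha : a ≠ 0) (hb : b ≠ 0) : a ⊗ₜ[ℂ] b ≠ (0 : TT) := by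
  obtain ⟨i, hi⟩ := exists_coord_ne ha
  obtain ⟨j, hj⟩ := exists_coord_ne hb
  intro h
  have h2 := congrArg (fun w => bT.repr w (i, j)) h
  simp only [bT_repr_tmul, map_zero, Finsupp.coe_zero, Pi.zero_apply] at h2
  rcases mul_eq_zero.1 h2 with h3 | h3
  · exact hi h3
  · exact hj h3

lemma tmul_factors {a b u v : EE} (ha : a ≠ 0) (hb : b ≠ 0) (c : ℂ)
    (h : a ⊗ₜ[ℂ] b = c • (u ⊗ₜ[ℂ] v)) :
    (∃ γ : ℂ, γ ≠ 0 ∧ a = γ • u) ∧ (∃ δ : ℂ, δ ≠ 0 ∧ b = δ • v) := by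
  have hco : ∀ i j, a i * b j = c * (u i * v j) := by
    intro i j
    have h2 := congrArg (fun w => bT.repr w (i, j)) h
    simpa [bT_repr_tmul, smul_eq_mul] using h2
  obtain ⟨i0, hi0⟩ := exists_coord_ne ha
  obtain ⟨j0, hj0⟩ := exists_coord_ne hb
  constructor
  · have key : a = (c * v j0 / b j0) • u := by
      apply eq_smul_of_coords
      intro i
      rw [div_mul_eq_mul_div, eq_div_iff hj0]
      linear_combination hco i j0
    refine ⟨_, fun h0 => ha ?_, key⟩
    rw [h0, zero_smul] at key
    exact key
  · have key : b = (c * u i0 / a i0) • v := by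
      apply eq_smul_of_coords
      intro j
      rw [div_mul_eq_mul_div, eq_div_iff hi0]
      linear_combination hco i0 j
    refine ⟨_, fun h0 => hb ?_, key⟩
    rw [h0, zero_smul] at key
    exact key

/-- The product tensor attached to a pair of projective points. -/
def tt (z : PC2 × PC2) : TT := z.1.rep ⊗ₜ[ℂ] z.2.rep

/-- The element of `L0` attached to a subspace. -/
def LW (W : Submodule ℂ TT) : Set (PC2 × PC2) := {x | tt x ∈ W}

lemma mem_L0_iff {a : Set (PC2 × PC2)} : a ∈ L0 ↔ ∃ W, a = LW W := Iff.rfl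

lemma mem_LW {W : Submodule ℂ TT} {z : PC2 × PC2} : z ∈ LW W ↔ tt z ∈ W := Iff.rfl

lemma tt_ne (z : PC2 × PC2) : tt z ≠ 0 := tmul_ne_zero' z.1.rep_nonzero z.2.rep_nonzero

lemma tt_mk (a b : EE) (ha : a ≠ 0) (hb : b ≠ 0) :
    ∃ c : ℂ, c ≠ 0 ∧
      tt (Projectivization.mk ℂ a ha, Projectivization.mk ℂ b hb) = c • (a ⊗ₜ[ℂ] b) := by
  obtain ⟨γ, hγ⟩ := Projectivization.exists_smul_eq_mk_rep ℂ a ha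
  obtain ⟨δ, hδ⟩ := Projectivization.exists_smul_eq_mk_rep ℂ b hb
  refine ⟨(γ : ℂ) * (δ : ℂ), by simp [γ.ne_zero, δ.ne_zero], ?_⟩
  show _ ⊗ₜ[ℂ] _ = _
  rw [← hγ, ← hδ, Units.smul_def, Units.smul_def, TensorProduct.smul_tmul_smul]

lemma tt_mk_not_mem {V : Submodule ℂ TT} {a b : EE} (ha : a ≠ 0) (hb : b ≠ 0)
    (h : a ⊗ₜ[ℂ] b ∉ V) :
    tt (Projectivization.mk ℂ a ha, Projectivization.mk ℂ b hb) ∉ V := by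
  obtain ⟨c, hc, he⟩ := tt_mk a b ha hb
  rw [he]
  intro hm
  exact h ((Submodule.smul_mem_iff _ hc).1 hm)

lemma cover_lemma {M : Type*} [AddCommGroup M] [Module ℂ M] {p q : Submodule ℂ M}
    (h : ∀ x : M, x ∈ p ∨ x ∈ q) : p = ⊤ ∨ q = ⊤ := by
  by_contra hc
  push_neg at hc
  obtain ⟨hp, hq⟩ := hc
  obtain ⟨x, hx⟩ : ∃ x, x ∉ p := by
    by_contra h'; push_neg at h'; exact hp (Submodule.eq_top_iff'.2 h')
  obtain ⟨y, hy⟩ : ∃ y, y ∉ q := by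
    by_contra h'; push_neg at h'; exact hq (Submodule.eq_top_iff'.2 h')
  have hxq : x ∈ q := (h x).resolve_left hx
  have hyp : y ∈ p := (h y).resolve_right hy
  rcases h (x + y) with hxy | hxy
  · exact hx (by simpa using p.sub_mem hxy hyp)
  · exact hy (by simpa using q.sub_mem hxy hxq)

lemma exists_pt_not_mem {V₁ V₂ : Submodule ℂ TT} (h1 : V₁ ≠ ⊤) (h2 : V₂ ≠ ⊤) :
    ∃ z : PC2 × PC2, tt z ∉ V₁ ∧ tt z ∉ V₂ := by
  by_contra hcon
  push_neg at hcon
  have key : ∀ a b : EE, a ⊗ₜ[ℂ] b ∈ V₁ ∨ a ⊗ₜ[ℂ] b ∈ V₂ := by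
    intro a b
    by_cases ha : a = 0
    · left; simp [ha]
    by_cases hb : b = 0
    · left; simp [hb]
    by_cases hm : a ⊗ₜ[ℂ] b ∈ V₁
    · exact .inl hm
    right
    have h' := hcon (Projectivization.mk ℂ a ha, Projectivization.mk ℂ b hb)
      (tt_mk_not_mem ha hb hm)
    obtain ⟨c, hcne, he⟩ := tt_mk a b ha hb
    rw [he] at h'
    exact (Submodule.smul_mem_iff _ hcne).1 h'
  have key2 : ∀ a : EE, (∀ b, a ⊗ₜ[ℂ] b ∈ V₁) ∨ (∀ b, a ⊗ₜ[ℂ] b ∈ V₂) := by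
    intro a
    have := cover_lemma (p := Submodule.comap (TensorProduct.mk ℂ EE EE a) V₁)
      (q := Submodule.comap (TensorProduct.mk ℂ EE EE a) V₂) (fun b => key a b)
    rcases this with h | h
    · exact .inl fun b => Submodule.eq_top_iff'.1 h b
    · exact .inr fun b => Submodule.eq_top_iff'.1 h b
  let T1 : Submodule ℂ EE :=
    { carrier := {a | ∀ b, a ⊗ₜ[ℂ] b ∈ V₁}
      add_mem' := fun hx hy b => by
        rw [add_tmul]; exact V₁.add_mem (hx b) (hy b)
      zero_mem' := fun b => by rw [zero_tmul]; exact V₁.zero_mem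
      smul_mem' := fun c x hx b => by
        rw [← smul_tmul']; exact V₁.smul_mem c (hx b) }
  let T2 : Submodule ℂ EE :=
    { carrier := {a | ∀ b, a ⊗ₜ[ℂ] b ∈ V₂}
      add_mem' := fun hx hy b => by
        rw [add_tmul]; exact V₂.add_mem (hx b) (hy b)
      zero_mem' := fun b => by rw [zero_tmul]; exact V₂.zero_mem
      smul_mem' := fun c x hx b => by
        rw [← smul_tmul']; exact V₂.smul_mem c (hx b) }
  have hcov : ∀ a : EE, a ∈ T1 ∨ a ∈ T2 := key2
  have htop : ∀ {V : Submodule ℂ TT}, (∀ m n : EE, m ⊗ₜ[ℂ] n ∈ V) → V = ⊤ := by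
    intro V hV
    rw [eq_top_iff, ← TensorProduct.span_tmul_eq_top ℂ EE EE, Submodule.span_le]
    rintro t ⟨m, n, rfl⟩
    exact hV m n
  rcases cover_lemma hcov with h | h
  · exact h1 (htop fun m n => Submodule.eq_top_iff'.1 h m n)
  · exact h2 (htop fun m n => Submodule.eq_top_iff'.1 h m n)

lemma L0_eq_span {a : Set (PC2 × PC2)} (ha : a ∈ L0) :
    a = LW (Submodule.span ℂ (tt '' a)) := by
  obtain ⟨W, rfl⟩ := mem_L0_iff.1 ha
  apply Set.Subset.antisymm
  · intro z hz
    exact Submodule.subset_span ⟨z, hz, rfl⟩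
  · intro z hz
    have hle : Submodule.span ℂ (tt '' LW W) ≤ W :=
      Submodule.span_le.2 (by rintro t ⟨w, hw, rfl⟩; exact hw)
    exact hle hz

lemma cl_eq (s : Set (PC2 × PC2)) : cl L0 s = LW (Submodule.span ℂ (tt '' s)) := by
  apply Set.Subset.antisymm
  · apply Set.sInter_subset_of_mem
    exact ⟨mem_L0_iff.2 ⟨_, rfl⟩, fun z hz => Submodule.subset_span ⟨z, hz, rfl⟩⟩
  · intro z hz cset hcset
    obtain ⟨hc0, hsub⟩ := hcset
    obtain ⟨W, rfl⟩ := mem_L0_iff.1 hc0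
    have hle : Submodule.span ℂ (tt '' s) ≤ W :=
      Submodule.span_le.2 (by rintro t ⟨w, hw, rfl⟩; exact hsub hw)
    exact hle hz

lemma LW_univ_iff {W : Submodule ℂ TT} : LW W = Set.univ ↔ W = ⊤ := by
  constructor
  · intro h
    rw [eq_top_iff, ← TensorProduct.span_tmul_eq_top ℂ EE EE, Submodule.span_le]
    rintro t ⟨m, n, rfl⟩
    by_cases hm : m = 0
    · simp [hm]
    by_cases hn : n = 0
    · simp [hn]
    have hz : (Projectivization.mk ℂ m hm, Projectivization.mk ℂ n hn) ∈ LW W := by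
      rw [h]; trivial
    obtain ⟨c, hc, he⟩ := tt_mk m n hm hn
    rw [mem_LW, he] at hz
    exact (Submodule.smul_mem_iff _ hc).1 hz
  · rintro rfl
    ext z
    simp [LW]

lemma singleton_eq_LW (p : PC2 × PC2) :
    ({p} : Set (PC2 × PC2)) = LW (Submodule.span ℂ {tt p}) := by
  apply Set.Subset.antisymm
  · rintro z rfl
    exact Submodule.mem_span_singleton_self _
  · intro z hz
    rw [mem_LW, Submodule.mem_span_singleton] at hz
    obtain ⟨c, hc⟩ := hz
    have h := tmul_factors z.1.rep_nonzero z.2.rep_nonzero c hc.symm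
    obtain ⟨⟨γ, hγ, hγe⟩, ⟨δ, hδ, hδe⟩⟩ := h
    have h1 : z.1 = p.1 := by
      rw [← Projectivization.mk_rep z.1, ← Projectivization.mk_rep p.1]
      exact (Projectivization.mk_eq_mk_iff' ℂ _ _ _ _).2 ⟨γ, hγe.symm⟩
    have h2 : z.2 = p.2 := by
      rw [← Projectivization.mk_rep z.2, ← Projectivization.mk_rep p.2]
      exact (Projectivization.mk_eq_mk_iff' ℂ _ _ _ _).2 ⟨δ, hδe.symm⟩
    have : z = p := Prod.ext h1 h2
    simp [this]

lemma L0_is_plattice : IsPLattice L0 := by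
  refine ⟨?_, ?_, ?_, fun p => mem_L0_iff.2 ⟨_, singleton_eq_LW p⟩⟩
  · refine mem_L0_iff.2 ⟨⊥, ?_⟩
    ext z
    simp [LW, Submodule.mem_bot, tt_ne z]
  · refine mem_L0_iff.2 ⟨⊤, ?_⟩
    ext z
    simp [LW]
  · intro S hS
    have hch : ∀ s : S, ∃ W, (s : Set (PC2 × PC2)) = LW W := fun s => mem_L0_iff.1 (hS s.2)
    choose W hW using hch
    refine mem_L0_iff.2 ⟨⨅ s, W s, ?_⟩
    ext z
    simp only [Set.mem_sInter, LW, Set.mem_setOf_eq, Submodule.mem_iInf]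
    constructor
    · intro h s
      have h2 := h s.1 s.2
      rw [hW s] at h2
      exact h2
    · intro h t ht
      have h2 := h ⟨t, ht⟩
      have h3 : t = LW (W ⟨t, ht⟩) := hW ⟨t, ht⟩
      rw [h3]
      exact h2

lemma bE_apply (i j : Fin 2) : bE i j = if i = j then 1 else 0 := by
  have h : bE.repr (bE i) j = bE i j := rfl
  rw [← h, Basis.repr_self, Finsupp.single_apply]

lemma finrank_TT : Module.finrank ℂ TT = 4 := by
  rw [Module.finrank_tensorProduct, finrank_euclideanSpace_fin]

lemma ne_top_of_finrank_le {V : Submodule ℂ TT} (h : Module.finrank ℂ V ≤ 3) : V ≠ ⊤ := by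
  rintro rfl
  rw [finrank_top, finrank_TT] at h
  omega

lemma finrank_sup_le' (U V : Submodule ℂ TT) :
    Module.finrank ℂ (U ⊔ V : Submodule ℂ TT) ≤ Module.finrank ℂ U + Module.finrank ℂ V := by
  have h := Submodule.finrank_sup_add_finrank_inf_eq U V
  omega

lemma subset_pair {x y : PC2 × PC2} {s : Set (PC2 × PC2)} (hs : s ⊆ {x, y})
    (hne : s ≠ ∅) (hnd : s ≠ {x, y}) : s = {x} ∨ s = {y} := by
  obtain ⟨z, hz⟩ := Set.nonempty_iff_ne_empty.2 hne
  have hxy : ∀ w ∈ s, w = x ∨ w = y := fun w hw => hs hw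
  rcases hxy z hz with rfl | rfl
  · left
    apply Set.Subset.antisymm
    · intro w hw
      rcases hxy w hw with rfl | rfl
      · exact rfl
      · exfalso
        apply hnd
        apply Set.Subset.antisymm hs
        rintro u (rfl | rfl) <;> assumption
    · rintro w rfl; exact hz
  · right
    apply Set.Subset.antisymm
    · intro w hw
      rcases hxy w hw with rfl | rfl
      · exfalso
        apply hnd
        apply Set.Subset.antisymm hs
        rintro u (rfl | rfl) <;> assumption
      · exact rfl
    · rintro w rfl; exact hz

end Stmt19Aux

namespace Stmt19Aux

open Projectivization TensorProduct Module Submodule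

def e0 : EE := bE 0
def e1 : EE := bE 1

lemma he0 : e0 ≠ 0 := bE.ne_zero 0
lemma he1 : e1 ≠ 0 := bE.ne_zero 1

lemma e0_apply (j : Fin 2) : e0 j = if (0 : Fin 2) = j then 1 else 0 := bE_apply 0 j
lemma e1_apply (j : Fin 2) : e1 j = if (1 : Fin 2) = j then 1 else 0 := bE_apply 1 j

def px : PC2 × PC2 := (Projectivization.mk ℂ e0 he0, Projectivization.mk ℂ e0 he0)
def py : PC2 × PC2 := (Projectivization.mk ℂ e1 he1, Projectivization.mk ℂ e1 he1)

lemma px_ne_py : px ≠ py := by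
  intro h
  have h1 : Projectivization.mk ℂ e0 he0 = Projectivization.mk ℂ e1 he1 :=
    congrArg Prod.fst h
  obtain ⟨a, ha⟩ := (Projectivization.mk_eq_mk_iff' ℂ _ _ he0 he1).1 h1
  have h0 := congrArg (fun v : EE => v 0) ha
  simp [e0_apply, e1_apply, PiLp.smul_apply, smul_eq_mul] at h0

def Wd : Submodule ℂ TT := Submodule.span ℂ {e0 ⊗ₜ[ℂ] e0, e1 ⊗ₜ[ℂ] e1}

lemma d_eq : ({px, py} : Set (PC2 × PC2)) = LW Wd := by
  apply Set.Subset.antisymm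
  · rintro z (rfl | rfl)
    · obtain ⟨cc, hc, he⟩ := tt_mk e0 e0 he0 he0
      show tt px ∈ Wd
      rw [show px = (Projectivization.mk ℂ e0 he0, Projectivization.mk ℂ e0 he0) from rfl, he]
      exact Wd.smul_mem cc (Submodule.subset_span (by simp))
    · obtain ⟨cc, hc, he⟩ := tt_mk e1 e1 he1 he1
      show tt py ∈ Wd
      rw [show py = (Projectivization.mk ℂ e1 he1, Projectivization.mk ℂ e1 he1) from rfl, he]
      exact Wd.smul_mem cc (Submodule.subset_span (by simp))
  · intro z hz
    rw [mem_LW] at hz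
    obtain ⟨α, β, hαβ⟩ := Submodule.mem_span_pair.1 hz
    have ha : z.1.rep ≠ 0 := z.1.rep_nonzero
    have hb : z.2.rep ≠ 0 := z.2.rep_nonzero
    have h01 : z.1.rep 0 * z.2.rep 1 = 0 := by
      have h2 := congrArg (fun w => bT.repr w (0, 1)) hαβ
      simpa [tt, bT_repr_tmul, e0_apply, e1_apply, smul_eq_mul] using h2.symm
    have h10 : z.1.rep 1 * z.2.rep 0 = 0 := by
      have h2 := congrArg (fun w => bT.repr w (1, 0)) hαβ
      simpa [tt, bT_repr_tmul, e0_apply, e1_apply, smul_eq_mul] using h2.symm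
    have hcoord : ∀ w : EE, w ≠ 0 → w 0 = 0 → w 1 ≠ 0 := by
      intro w hw h0
      obtain ⟨i, hi⟩ := exists_coord_ne hw
      fin_cases i
      · exact absurd h0 hi
      · exact hi
    have hcoord' : ∀ w : EE, w ≠ 0 → w 1 = 0 → w 0 ≠ 0 := by
      intro w hw h1
      obtain ⟨i, hi⟩ := exists_coord_ne hw
      fin_cases i
      · exact hi
      · exact absurd h1 hi
    rcases mul_eq_zero.1 h01 with h1 | h1
    · -- z.1.rep 0 = 0, so z = py
      have ha1 : z.1.rep 1 ≠ 0 := hcoord _ ha h1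
      have hb0 : z.2.rep 0 = 0 := by
        rcases mul_eq_zero.1 h10 with h | h
        · exact absurd h ha1
        · exact h
      have hz1 : z.1 = Projectivization.mk ℂ e1 he1 := by
        rw [← Projectivization.mk_rep z.1]
        apply (Projectivization.mk_eq_mk_iff' ℂ _ _ _ _).2
        refine ⟨z.1.rep 1, ?_⟩
        exact (eq_smul_of_coords fun i => by
          fin_cases i <;> simp [e1_apply, h1]).symm
      have hz2 : z.2 = Projectivization.mk ℂ e1 he1 := by
        rw [← Projectivization.mk_rep z.2]
        apply (Projectivization.mk_eq_mk_iff' ℂ _ _ _ _).2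
        refine ⟨z.2.rep 1, ?_⟩
        exact (eq_smul_of_coords fun i => by
          fin_cases i <;> simp [e1_apply, hb0]).symm
      have : z = py := Prod.ext hz1 hz2
      rw [this]
      exact Set.mem_insert_iff.2 (Or.inr rfl)
    · -- z.2.rep 1 = 0, so z = px
      have hb0 : z.2.rep 0 ≠ 0 := hcoord' _ hb h1
      have ha1 : z.1.rep 1 = 0 := by
        rcases mul_eq_zero.1 h10 with h | h
        · exact h
        · exact absurd h hb0
      have hz1 : z.1 = Projectivization.mk ℂ e0 he0 := by
        rw [← Projectivization.mk_rep z.1]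
        apply (Projectivization.mk_eq_mk_iff' ℂ _ _ _ _).2
        refine ⟨z.1.rep 0, ?_⟩
        exact (eq_smul_of_coords fun i => by
          fin_cases i <;> simp [e0_apply, ha1]).symm
      have hz2 : z.2 = Projectivization.mk ℂ e0 he0 := by
        rw [← Projectivization.mk_rep z.2]
        apply (Projectivization.mk_eq_mk_iff' ℂ _ _ _ _).2
        refine ⟨z.2.rep 0, ?_⟩
        exact (eq_smul_of_coords fun i => by
          fin_cases i <;> simp [e0_apply, h1]).symm
      have : z = px := Prod.ext hz1 hz2
      rw [this]
      exact Set.mem_insert_iff.2 (Or.inl rfl)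

end Stmt19Aux

namespace Stmt19Aux

open Projectivization TensorProduct Module Submodule

lemma no_orthocomplement :
    ¬ ∃ c : Set (PC2 × PC2) → Set (PC2 × PC2),
      (∀ a ∈ L0, c a ∈ L0) ∧
      (∀ a ∈ L0, ∀ b ∈ L0, a ⊆ b → c b ⊆ c a) ∧
      (∀ a ∈ L0, c (c a) = a) ∧
      (∀ a ∈ L0, a ∩ c a = ∅) ∧
      (∀ a ∈ L0, cl L0 (a ∪ c a) = Set.univ) := by
  rintro ⟨c, hmem, hanti, hinv, hdisj, hjoin⟩
  classical
  have hcinj : ∀ A B : Set (PC2 × PC2), A ∈ L0 → B ∈ L0 → c A = c B → A = B := by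
    intro A B hA hB h
    rw [← hinv _ hA, h, hinv _ hB]
  have hunivL0 : Set.univ ∈ L0 := mem_L0_iff.2 ⟨⊤, by ext z; simp [LW]⟩
  have hemptyL0 : (∅ : Set (PC2 × PC2)) ∈ L0 :=
    mem_L0_iff.2 ⟨⊥, by ext z; simp [LW, Submodule.mem_bot, tt_ne z]⟩
  have hcuniv : c Set.univ = ∅ := by
    have h := hdisj _ hunivL0
    simpa using h
  have hcempty : c ∅ = Set.univ := by
    have h := hinv _ hunivL0
    rw [hcuniv] at h
    exact h
  set d : Set (PC2 × PC2) := {px, py} with hddef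
  have hdL0 : d ∈ L0 := mem_L0_iff.2 ⟨Wd, d_eq⟩
  have hxL0 : ({px} : Set (PC2 × PC2)) ∈ L0 := mem_L0_iff.2 ⟨_, singleton_eq_LW px⟩
  set W' : Submodule ℂ TT := Submodule.span ℂ (tt '' c d) with hW'def
  set Wx : Submodule ℂ TT := Submodule.span ℂ (tt '' c {px}) with hWxdef
  have hcd : c d = LW W' := L0_eq_span (hmem d hdL0)
  have hcx : c {px} = LW Wx := L0_eq_span (hmem _ hxL0)
  -- Wx has dimension 3
  have hxnot : tt px ∉ Wx := by
    have h := hdisj _ hxL0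
    have hnc : px ∉ c {px} := by
      intro hc2
      have hxx : px ∈ ({px} : Set (PC2 × PC2)) ∩ c {px} := ⟨rfl, hc2⟩
      rw [h] at hxx
      exact hxx
    rw [hcx] at hnc
    exact hnc
  have hWxtop : Submodule.span ℂ {tt px} ⊔ Wx = ⊤ := by
    have h := hjoin _ hxL0
    rw [cl_eq] at h
    have h2 := LW_univ_iff.1 h
    rw [Set.image_union, Submodule.span_union, Set.image_singleton] at h2
    exact h2
  have hWx3 : Module.finrank ℂ Wx = 3 := by
    have hle : Module.finrank ℂ Wx ≤ 3 := by
      have hlt : Wx < ⊤ := lt_top_iff_ne_top.2 (fun h => hxnot (h ▸ Submodule.mem_top))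
      have h2 := Submodule.finrank_lt (K := ℂ) hlt.ne
      rw [finrank_TT] at h2
      omega
    have hge : 3 ≤ Module.finrank ℂ Wx := by
      have h4 : Module.finrank ℂ (⊤ : Submodule ℂ TT) = 4 := by rw [finrank_top, finrank_TT]
      have hsup := finrank_sup_le' (Submodule.span ℂ {tt px}) Wx
      rw [hWxtop, h4, finrank_span_singleton (tt_ne px)] at hsup
      omega
    omega
  -- W' is strictly below Wx, hence of dimension at most 2
  have hcdsub : c d ⊆ c {px} :=
    hanti _ hxL0 _ hdL0 (Set.singleton_subset_iff.2 (Set.mem_insert _ _))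
  have hW'le : W' ≤ Wx := Submodule.span_le.2 (by
    rintro t ⟨w, hw, rfl⟩
    exact Submodule.subset_span ⟨w, hcdsub hw, rfl⟩)
  have hW'ne : W' ≠ Wx := by
    intro h
    have hcc : c d = c {px} := by rw [hcd, hcx, h]
    have hd2 : d = ({px} : Set (PC2 × PC2)) := hcinj _ _ hdL0 hxL0 hcc
    have : py ∈ ({px} : Set (PC2 × PC2)) := by
      rw [← hd2]
      exact Set.mem_insert_iff.2 (Or.inr rfl)
    exact px_ne_py (Set.mem_singleton_iff.1 this).symm
  have hW'2 : Module.finrank ℂ W' ≤ 2 := by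
    have h2 := Submodule.finrank_lt_finrank_of_lt (lt_of_le_of_ne hW'le hW'ne)
    omega
  have hW'top : W' ≠ ⊤ := ne_top_of_finrank_le (by omega)
  -- three points giving three distinct proper elements above c d
  obtain ⟨z1, hz1, -⟩ := exists_pt_not_mem hW'top hW'top
  set V1 : Submodule ℂ TT := W' ⊔ Submodule.span ℂ {tt z1} with hV1def
  have hV1top : V1 ≠ ⊤ := by
    apply ne_top_of_finrank_le
    have h2 := finrank_sup_le' W' (Submodule.span ℂ {tt z1})
    rw [finrank_span_singleton (tt_ne z1)] at h2
    rw [← hV1def] at h2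
    omega
  obtain ⟨z2, hz2, -⟩ := exists_pt_not_mem hV1top hV1top
  set V2 : Submodule ℂ TT := W' ⊔ Submodule.span ℂ {tt z2} with hV2def
  have hV2top : V2 ≠ ⊤ := by
    apply ne_top_of_finrank_le
    have h2 := finrank_sup_le' W' (Submodule.span ℂ {tt z2})
    rw [finrank_span_singleton (tt_ne z2)] at h2
    rw [← hV2def] at h2
    omega
  obtain ⟨z3, hz3a, hz3b⟩ := exists_pt_not_mem hV1top hV2top
  set V3 : Submodule ℂ TT := W' ⊔ Submodule.span ℂ {tt z3} with hV3def
  have hV3top : V3 ≠ ⊤ := by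
    apply ne_top_of_finrank_le
    have h2 := finrank_sup_le' W' (Submodule.span ℂ {tt z3})
    rw [finrank_span_singleton (tt_ne z3)] at h2
    rw [← hV3def] at h2
    omega
  set K1 : Set (PC2 × PC2) := LW V1 with hK1def
  set K2 : Set (PC2 × PC2) := LW V2 with hK2def
  set K3 : Set (PC2 × PC2) := LW V3 with hK3def
  have hK1L0 : K1 ∈ L0 := mem_L0_iff.2 ⟨V1, rfl⟩
  have hK2L0 : K2 ∈ L0 := mem_L0_iff.2 ⟨V2, rfl⟩
  have hK3L0 : K3 ∈ L0 := mem_L0_iff.2 ⟨V3, rfl⟩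
  have hz1K1 : z1 ∈ K1 :=
    Submodule.mem_sup_right (Submodule.mem_span_singleton_self (tt z1))
  have hz2K2 : z2 ∈ K2 :=
    Submodule.mem_sup_right (Submodule.mem_span_singleton_self (tt z2))
  have hz3K3 : z3 ∈ K3 :=
    Submodule.mem_sup_right (Submodule.mem_span_singleton_self (tt z3))
  have hz2K1 : z2 ∉ K1 := hz2
  have hz3K1 : z3 ∉ K1 := hz3a
  have hz3K2 : z3 ∉ K2 := hz3b
  have hK12 : K1 ≠ K2 := by
    intro h
    apply hz2K1
    rw [h]
    exact hz2K2
  have hK13 : K1 ≠ K3 := by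
    intro h
    apply hz3K1
    rw [h]
    exact hz3K3
  have hK23 : K2 ≠ K3 := by
    intro h
    apply hz3K2
    rw [h]
    exact hz3K3
  -- c d is contained in each K i
  have hcdK1 : c d ⊆ K1 := by
    rw [hcd]
    intro w hw
    exact Submodule.mem_sup_left hw
  have hcdK2 : c d ⊆ K2 := by
    rw [hcd]
    intro w hw
    exact Submodule.mem_sup_left hw
  have hcdK3 : c d ⊆ K3 := by
    rw [hcd]
    intro w hw
    exact Submodule.mem_sup_left hw
  -- each K i differs from c d
  have hK1cd : K1 ≠ c d := by
    intro h
    apply hz1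
    have : z1 ∈ c d := by rw [← h]; exact hz1K1
    rw [hcd] at this
    exact this
  have hK2cd : K2 ≠ c d := by
    intro h
    have : z2 ∈ c d := by rw [← h]; exact hz2K2
    rw [hcd] at this
    exact hz2 (Submodule.mem_sup_left this)
  have hK3cd : K3 ≠ c d := by
    intro h
    have : z3 ∈ c d := by rw [← h]; exact hz3K3
    rw [hcd] at this
    exact hz3a (Submodule.mem_sup_left this)
  -- analysis of c K i
  have hcdL0 : c d ∈ L0 := hmem d hdL0
  have key : ∀ K : Set (PC2 × PC2), K ∈ L0 → K ≠ Set.univ → K ≠ c d → c d ⊆ K →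
      c K = {px} ∨ c K = {py} := by
    intro K hKL0 hKuniv hKcd hsub
    have h1 : c K ⊆ d := by
      have h2 := hanti _ hcdL0 _ hKL0 hsub
      rw [hinv _ hdL0] at h2
      exact h2
    have h2 : c K ≠ ∅ := by
      intro h
      apply hKuniv
      rw [← hinv _ hKL0, h, hcempty]
    have h3 : c K ≠ d := by
      intro h
      apply hKcd
      rw [← hinv _ hKL0, h]
    exact subset_pair h1 h2 h3
  have hKuniv : ∀ V : Submodule ℂ TT, V ≠ ⊤ → LW V ≠ Set.univ := by
    intro V hV h
    exact hV (LW_univ_iff.1 h)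
  have s1 := key K1 hK1L0 (hKuniv _ hV1top) hK1cd hcdK1
  have s2 := key K2 hK2L0 (hKuniv _ hV2top) hK2cd hcdK2
  have s3 := key K3 hK3L0 (hKuniv _ hV3top) hK3cd hcdK3
  rcases s1 with h1 | h1 <;> rcases s2 with h2 | h2 <;> rcases s3 with h3 | h3
  · exact hK12 (hcinj _ _ hK1L0 hK2L0 (h1.trans h2.symm))
  · exact hK12 (hcinj _ _ hK1L0 hK2L0 (h1.trans h2.symm))
  · exact hK13 (hcinj _ _ hK1L0 hK3L0 (h1.trans h3.symm))
  · exact hK23 (hcinj _ _ hK2L0 hK3L0 (h2.trans h3.symm))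
  · exact hK23 (hcinj _ _ hK2L0 hK3L0 (h2.trans h3.symm))
  · exact hK13 (hcinj _ _ hK1L0 hK3L0 (h1.trans h3.symm))
  · exact hK12 (hcinj _ _ hK1L0 hK2L0 (h1.trans h2.symm))
  · exact hK12 (hcinj _ _ hK1L0 hK2L0 (h1.trans h2.symm))

end Stmt19Aux


/-- `L₀` is a p-lattice, but it admits no ortho-complementation: no map
`' : L₀ → L₀` is order-reversing, involutive, and satisfies `a ∧ a' = ∅` and
`a ∨ a' = Σ` (the join being the intersection of all members of `L₀` containing the
union). -/
theorem stmt19 :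
    IsPLattice L0 ∧
    ¬ ∃ c : Set (PC2 × PC2) → Set (PC2 × PC2),
      (∀ a ∈ L0, c a ∈ L0) ∧
      (∀ a ∈ L0, ∀ b ∈ L0, a ⊆ b → c b ⊆ c a) ∧
      (∀ a ∈ L0, c (c a) = a) ∧
      (∀ a ∈ L0, a ∩ c a = ∅) ∧
      (∀ a ∈ L0, cl L0 (a ∪ c a) = univ) := by
  exact ⟨Stmt19Aux.L0_is_plattice, Stmt19Aux.no_orthocomplement⟩

end
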